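/- Let T be an invertible measure preserving transformation of a probability space and b a strictly increasing sequence of positive integers. The collection R_IP(b) := {A ∈ ℬ : m(A △ T^{b(F)} A) → 0 as min F → ∞ over finite nonempty F} is a T-invariant σ-algebra. -/

import Mathlib

open MeasureTheory ENNReal

variable {X : Type*} [MeasurableSpace X]

/-- the collection `R_IP(b)` of measurable sets `A` with
`m(A △ T^{b(F)} A) → 0` as `min F → ∞` over finite nonempty `F ⊆ ℕ`.
(Here `T^{b(F)} A` is the image of `A` under the `b(F)`-th iterate of `T = e`,
i.e. the preimage under the iterate of `e.symm`.) -/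
def RIP (μ : Measure X) (e : X ≃ᵐ X) (b : ℕ → ℕ) : Set (Set X) :=
  {A | MeasurableSet A ∧ ∀ ε : ℝ≥0∞, 0 < ε → ∃ K : ℕ, ∀ F : Finset ℕ, ∀ hF : F.Nonempty,
    K ≤ F.min' hF → μ (symmDiff A ((⇑e.symm)^[∑ j ∈ F, b j] ⁻¹' A)) < ε}

lemma symmDiff_biUnion_subset (F : Finset ℕ) (s t : ℕ → Set X) :
    symmDiff (⋃ i ∈ F, s i) (⋃ i ∈ F, t i) ⊆ ⋃ i ∈ F, symmDiff (s i) (t i) := by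
  intro x hx
  rw [Set.mem_symmDiff] at hx
  simp only [Set.mem_iUnion, not_exists] at hx ⊢
  rcases hx with ⟨⟨i, hi, hxi⟩, h2⟩ | ⟨⟨i, hi, hxi⟩, h2⟩ <;>
    exact ⟨i, hi, by rw [Set.mem_symmDiff]; first | exact Or.inl ⟨hxi, h2 i hi⟩ |
      exact Or.inr ⟨hxi, h2 i hi⟩⟩

/-- `R_IP(b)` is a `T`-invariant σ-algebra: it contains `∅`, and is closed under
complements, countable unions, and under `T` (and `T⁻¹`). -/
theorem stmt16 (μ : Measure X) [IsProbabilityMeasure μ]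
    (e : X ≃ᵐ X) (he : MeasurePreserving e μ μ)
    (b : ℕ → ℕ) (hb : StrictMono b) (hbpos : ∀ n, 0 < b n) :
    (∅ : Set X) ∈ RIP μ e b ∧
    (∀ A, A ∈ RIP μ e b → Aᶜ ∈ RIP μ e b) ∧
    (∀ f : ℕ → Set X, (∀ n, f n ∈ RIP μ e b) → (⋃ n, f n) ∈ RIP μ e b) ∧
    (∀ A, A ∈ RIP μ e b ↔ ⇑e ⁻¹' A ∈ RIP μ e b) := by
  have hSm : ∀ k : ℕ, Measurable ((⇑e.symm)^[k]) := fun k => e.symm.measurable.iterate k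
  have hS : ∀ k : ℕ, MeasurePreserving ((⇑e.symm)^[k]) μ μ := fun k => (he.symm e).iterate k
  refine ⟨⟨MeasurableSet.empty, fun ε hε => ⟨0, fun F hF _ => by simpa using hε⟩⟩, ?_, ?_, ?_⟩
  · rintro A ⟨hA, h⟩
    refine ⟨hA.compl, fun ε hε => ?_⟩
    obtain ⟨K, hK⟩ := h ε hε
    refine ⟨K, fun F hF hmin => ?_⟩
    simpa [Set.preimage_compl, compl_symmDiff_compl] using hK F hF hmin
  · rintro f hf
    have hfm : ∀ n, MeasurableSet (f n) := fun n => (hf n).1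
    refine ⟨MeasurableSet.iUnion hfm, fun ε hε => ?_⟩
    set δ : ℝ≥0∞ := min ε 1 with hδdef
    have hδ0 : δ ≠ 0 := (lt_min hε zero_lt_one).ne'
    have hδtop : δ ≠ ⊤ := ne_top_of_le_ne_top one_ne_top (min_le_right _ _)
    set d : ℝ≥0∞ := δ / 4 with hddef
    have hd0 : d ≠ 0 := (ENNReal.div_pos hδ0 (by norm_num)).ne'
    have hdtop : d ≠ ⊤ := (ENNReal.div_lt_top hδtop (by norm_num)).ne
    set U : Set X := ⋃ n, f n with hU
    have hUm : MeasurableSet U := MeasurableSet.iUnion hfm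
    set g : ℕ → Set X := fun N => ⋃ n ∈ Finset.range N, f n with hg
    have hgm : ∀ N, MeasurableSet (g N) := fun N => (Finset.range N).measurableSet_biUnion
      (fun n _ => hfm n)
    have hgU : ∀ N, g N ⊆ U := fun N => Set.iUnion₂_subset fun n _ => Set.subset_iUnion f n
    -- continuity from above for U \ g N
    have hanti : Antitone (fun N => U \ g N) := by
      intro m n hmn
      exact Set.diff_subset_diff_right (Set.biUnion_subset_biUnion_left
        (Finset.range_subset_range.mpr hmn))
    have hiInter : ⋂ N, (U \ g N) = ∅ := by
      ext x
      simp only [Set.mem_iInter, Set.mem_diff, Set.mem_empty_iff_false, iff_false, not_forall]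
      by_cases hx : x ∈ U
      · obtain ⟨n, hxn⟩ := Set.mem_iUnion.mp hx
        exact ⟨n + 1, fun h => h.2 (Set.mem_biUnion (Finset.mem_range.mpr n.lt_succ_self) hxn)⟩
      · exact ⟨0, fun h => hx h.1⟩
    have htend : Filter.Tendsto (fun N => μ (U \ g N)) Filter.atTop (nhds 0) := by
      have := tendsto_measure_iInter_atTop (μ := μ) (s := fun N => U \ g N)
        (fun N => ((hUm.diff (hgm N)).nullMeasurableSet)) hanti
        ⟨0, (measure_lt_top μ _).ne⟩
      rwa [hiInter, measure_empty] at this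
    obtain ⟨N, hN⟩ := (Filter.tendsto_atTop'.mp htend (Set.Iio d)
      (IsOpen.mem_nhds isOpen_Iio (pos_iff_ne_zero.mpr hd0)))
    have hNd : μ (U \ g N) < d := hN N le_rfl
    -- pick K_n for each n < N
    have hdN0 : (0 : ℝ≥0∞) < d / N := ENNReal.div_pos hd0 (by simp)
    choose Kn hKn using fun n => (hf n).2 (d / N) hdN0
    set K : ℕ := (Finset.range N).sup Kn with hKdef
    refine ⟨K, fun F hF hmin => ?_⟩
    set k : ℕ := ∑ j ∈ F, b j with hk
    set S : X → X := (⇑e.symm)^[k] with hSdef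
    have t1 : μ (symmDiff U (g N)) < d := by
      rw [symmDiff_comm, symmDiff_of_le (hgU N)]; exact hNd
    have t3 : μ (symmDiff (S ⁻¹' (g N)) (S ⁻¹' U)) < d := by
      rw [← Set.preimage_symmDiff, (hS k).measure_preimage
        (((hgm N).symmDiff hUm).nullMeasurableSet)]
      rw [symmDiff_of_le (hgU N)]; exact hNd
    have t2 : μ (symmDiff (g N) (S ⁻¹' (g N))) ≤ d := by
      have hsub : symmDiff (g N) (S ⁻¹' (g N)) ⊆
          ⋃ n ∈ Finset.range N, symmDiff (f n) (S ⁻¹' (f n)) := by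
        have : S ⁻¹' (g N) = ⋃ n ∈ Finset.range N, S ⁻¹' (f n) := by
          simp [hg, Set.preimage_iUnion]
        rw [this]
        exact symmDiff_biUnion_subset _ _ _
      calc μ (symmDiff (g N) (S ⁻¹' (g N)))
          ≤ ∑ n ∈ Finset.range N, μ (symmDiff (f n) (S ⁻¹' (f n))) :=
            (measure_mono hsub).trans (measure_biUnion_finset_le _ _)
        _ ≤ ∑ _n ∈ Finset.range N, d / N := by
            refine Finset.sum_le_sum fun n hn => ?_
            exact le_of_lt (hKn n F hF (le_trans (Finset.le_sup hn) hmin))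
        _ = N * (d / N) := by rw [Finset.sum_const, Finset.card_range, nsmul_eq_mul]
        _ ≤ d := ENNReal.mul_div_le
    have tri : μ (symmDiff U (S ⁻¹' U)) ≤
        μ (symmDiff U (g N)) + (μ (symmDiff (g N) (S ⁻¹' (g N)))
          + μ (symmDiff (S ⁻¹' (g N)) (S ⁻¹' U))) :=
      le_trans (measure_symmDiff_le U (g N) (S ⁻¹' U))
        (add_le_add_right (measure_symmDiff_le (g N) (S ⁻¹' (g N)) (S ⁻¹' U)) _)
    have hlt : μ (symmDiff U (S ⁻¹' U)) < δ := by
      have h3 : μ (symmDiff U (g N)) + (μ (symmDiff (g N) (S ⁻¹' (g N)))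
          + μ (symmDiff (S ⁻¹' (g N)) (S ⁻¹' U))) < d + (d + d) :=
        ENNReal.add_lt_add_of_lt_of_le
          ((ENNReal.add_lt_top.mpr ⟨measure_lt_top μ _, measure_lt_top μ _⟩).ne) t1
          (add_le_add t2 (le_of_lt t3))
      have h4 : d + (d + d) < δ := by
        have h4d : d * 4 = δ := ENNReal.div_mul_cancel (by norm_num) (by norm_num)
        have : d + (d + d) = d * 3 := by ring
        rw [this, ← h4d]
        exact ENNReal.mul_lt_mul_iff_right hd0 hdtop |>.mpr (by norm_num)
      exact lt_trans (lt_of_le_of_lt tri h3) h4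
    exact lt_of_lt_of_le hlt (min_le_left _ _)
  · intro A
    have hcomm : ∀ k : ℕ, ⇑e ∘ (⇑e.symm)^[k] = (⇑e.symm)^[k] ∘ ⇑e := by
      intro k
      have hc : Function.Commute ⇑e ⇑e.symm := fun x => by simp
      exact (hc.iterate_right k).comp_eq
    have key : ∀ (B : Set X), MeasurableSet B → ∀ k : ℕ,
        μ (symmDiff (⇑e ⁻¹' B) ((⇑e.symm)^[k] ⁻¹' (⇑e ⁻¹' B))) =
        μ (symmDiff B ((⇑e.symm)^[k] ⁻¹' B)) := by
      intro B hB k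
      have h1 : (⇑e.symm)^[k] ⁻¹' (⇑e ⁻¹' B) = ⇑e ⁻¹' ((⇑e.symm)^[k] ⁻¹' B) := by
        rw [← Set.preimage_comp, ← Set.preimage_comp, hcomm k]
      rw [h1, ← Set.preimage_symmDiff,
        he.measure_preimage ((hB.symmDiff ((hSm k) hB)).nullMeasurableSet)]
    constructor
    · rintro ⟨hA, h⟩
      refine ⟨hA.preimage e.measurable, fun ε hε => ?_⟩
      obtain ⟨K, hK⟩ := h ε hε
      refine ⟨K, fun F hF hmin => ?_⟩
      rw [key A hA _]
      exact hK F hF hmin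
    · rintro ⟨hA', h⟩
      have hA : MeasurableSet A := by
        have := hA'.preimage e.symm.measurable
        rwa [← Set.preimage_comp, MeasurableEquiv.self_comp_symm, Set.preimage_id] at this
      refine ⟨hA, fun ε hε => ?_⟩
      obtain ⟨K, hK⟩ := h ε hε
      refine ⟨K, fun F hF hmin => ?_⟩
      have := hK F hF hmin
      rwa [key A hA _] at this
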